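/- Let X be a uniquely divisible additive commutative monoid. Then there exist an additive commutative monoid C equipped with a module structure over ℝ≥0 (a convex cone) and an injective additive monoid homomorphism M : X → C such that every element of C is a finite sum of elements of the form c • M(x) with c in ℝ≥0 and x in X. -/

import Mathlib

open scoped NNReal

namespace Stmt17

noncomputable instance : SMul ℝ≥0 (Additive ℝ≥0) :=
  ⟨fun c x => Additive.ofMul (x.toMul ^ (c : ℝ))⟩

lemma smul_def (c : ℝ≥0) (x : Additive ℝ≥0) :
    c • x = Additive.ofMul (x.toMul ^ (c : ℝ)) := rfl

noncomputable instance : Module ℝ≥0 (Additive ℝ≥0) where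
  one_smul x := by simp [smul_def]
  mul_smul c d x := by
    show Additive.ofMul (x.toMul ^ (((c*d : ℝ≥0)):ℝ)) =
      Additive.ofMul ((x.toMul ^ (d:ℝ)) ^ (c:ℝ))
    rw [NNReal.coe_mul, mul_comm (c:ℝ), NNReal.rpow_mul]
  smul_zero c := by
    show Additive.ofMul ((1:ℝ≥0) ^ (c:ℝ)) = Additive.ofMul 1
    rw [NNReal.one_rpow]
  smul_add c x y := by
    show Additive.ofMul ((x.toMul * y.toMul) ^ (c:ℝ)) = Additive.ofMul (x.toMul ^ (c:ℝ) * y.toMul ^ (c:ℝ))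
    rw [NNReal.mul_rpow]
  add_smul c d x := by
    show Additive.ofMul (x.toMul ^ (((c + d : ℝ≥0)):ℝ)) = Additive.ofMul (x.toMul ^ (c:ℝ) * x.toMul ^ (d:ℝ))
    rcases eq_or_ne (c + d) 0 with h | h
    · obtain ⟨hc, hd⟩ := add_eq_zero.mp h
      rw [h, hc, hd]; simp
    · rw [NNReal.coe_add, NNReal.rpow_add' (by exact_mod_cast h)]
  zero_smul x := by
    show Additive.ofMul (x.toMul ^ ((0:ℝ≥0):ℝ)) = Additive.ofMul 1
    rw [NNReal.coe_zero, NNReal.rpow_zero]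

/-- exp as a map into `ℝ≥0`. -/
noncomputable def expNN (t : ℝ) : ℝ≥0 := ⟨Real.exp t, (Real.exp_pos t).le⟩

lemma expNN_add (s t : ℝ) : expNN (s + t) = expNN s * expNN t := by
  ext; exact Real.exp_add s t

lemma expNN_zero : expNN 0 = 1 := by ext; exact Real.exp_zero

lemma expNN_injective : Function.Injective expNN := fun s t h =>
  Real.exp_injective (congrArg Subtype.val h)


variable {X : Type u} [AddCommMonoid X]

/-- The face generated by `a`: elements that divide some positive multiple of `a`. -/
def face (a : X) : AddSubmonoid X where
  carrier := {z | ∃ w : X, ∃ n : ℕ, z + w = (n + 1) • a}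
  zero_mem' := ⟨a, 0, by simp⟩
  add_mem' := by
    rintro x y ⟨w, n, hw⟩ ⟨v, m, hv⟩
    exact ⟨w + v, n + m + 1, by
      have h : x + y + (w + v) = (x + w) + (y + v) := by abel
      rw [h, hw, hv, ← add_nsmul]; ring_nf⟩

lemma mem_face_self (a : X) : a ∈ face a := ⟨a, 1, by rw [two_nsmul]⟩

lemma mem_face_left {a x y : X} (h : x + y ∈ face a) : x ∈ face a := by
  obtain ⟨w, n, hw⟩ := h
  exact ⟨y + w, n, by rw [← hw]; abel⟩

lemma mem_face_of_nsmul_eq {a z y : X} (h : z ∈ face a) {n : ℕ} (hn : 0 < n)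
    (hy : n • y = z) : y ∈ face a := by
  obtain ⟨w, m, hw⟩ := h
  obtain ⟨k, rfl⟩ : ∃ k, n = k + 1 := ⟨n - 1, by omega⟩
  refine ⟨k • y + w, m, ?_⟩
  have h2 : y + (k • y + w) = (k + 1) • y + w := by rw [succ_nsmul' y k]; abel
  rw [h2, hy, hw]

lemma face_le_of_mem {a b : X} (h : a ∈ face b) : face a ≤ face b := by
  rintro z ⟨w, n, hw⟩
  obtain ⟨v, m, hv⟩ := h
  refine ⟨w + (n + 1) • v, n * m + n + m, ?_⟩
  have h1 : z + (w + (n+1) • v) = (z + w) + (n+1) • v := by abel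
  rw [h1, hw, ← nsmul_add, hv, ← mul_nsmul]
  congr 1
  ring

/-- Key cancellation computation. -/
lemma key_aux {u v : X} (M : ℕ) (h1 : (M + 1) • u = v + M • u) :
    ∀ k : ℕ, (M + k) • u = k • v + M • u := by
  intro k
  induction k with
  | zero => simp
  | succ k ih =>
      have h2 : (M + (k+1)) • u = u + (M + k) • u := by
        rw [← succ_nsmul' u (M + k)]; congr 1
      have h3 : u + (k • v + M • u) = k • v + (M + 1) • u := by
        rw [succ_nsmul' u M]; abel
      rw [h2, ih, h3, h1, succ_nsmul' v k]; abel

lemma key {u v : X} (M M' : ℕ) (h1 : (M + 1) • u = v + M • u)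
    (h2 : (M' + 1) • v = u + M' • v) : (M + M') • u = (M + M') • v := by
  have e1 := key_aux M h1 M'
  have e2 := key_aux M' h2 M
  rw [e1, show M + M' = M' + M from by omega, e2]
  abel


section Group

variable (F : AddSubmonoid X)

/-- The Grothendieck-group congruence on pairs. -/
def gcon : AddCon (↥F × ↥F) where
  r p q := ∃ z : ↥F, p.1 + q.2 + z = q.1 + p.2 + z
  iseqv := by
    refine ⟨fun p => ⟨0, rfl⟩, fun {p q} ⟨z, hz⟩ => ⟨z, hz.symm⟩, ?_⟩
    rintro p q s ⟨z, hz⟩ ⟨z', hz'⟩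
    refine ⟨q.1 + q.2 + z + z', ?_⟩
    have h1 : p.1 + s.2 + (q.1 + q.2 + z + z') = (p.1 + q.2 + z) + (q.1 + s.2 + z') := by abel
    have h2 : s.1 + p.2 + (q.1 + q.2 + z + z') = (q.1 + p.2 + z) + (s.1 + q.2 + z') := by abel
    rw [h1, h2, hz, hz']
  add' := by
    rintro p q p' q' ⟨z, hz⟩ ⟨z', hz'⟩
    refine ⟨z + z', ?_⟩
    have h1 : (p + p').1 + (q + q').2 + (z + z') = (p.1 + q.2 + z) + (p'.1 + q'.2 + z') := by
      simp only [Prod.fst_add, Prod.snd_add]; abel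
    have h2 : (q + q').1 + (p + p').2 + (z + z') = (q.1 + p.2 + z) + (q'.1 + p'.2 + z') := by
      simp only [Prod.fst_add, Prod.snd_add]; abel
    rw [h1, h2, hz, hz']

lemma gcon_iff (p q : ↥F × ↥F) :
    gcon F p q ↔ ∃ z : ↥F, p.1 + q.2 + z = q.1 + p.2 + z := Iff.rfl

/-- The Grothendieck group of the submonoid `F`. -/
abbrev GGroup := (gcon F).Quotient

/-- Negation on the Grothendieck group. -/
def gneg : GGroup F →+ GGroup F :=
  AddCon.lift _ ((gcon F).mk'.comp ((AddMonoidHom.snd ↥F ↥F).prod (AddMonoidHom.fst ↥F ↥F)))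
    (by
      rintro p q ⟨z, hz⟩
      apply (AddCon.eq _).mpr
      refine (gcon_iff F _ _).mpr ⟨z, ?_⟩
      dsimp only [AddMonoidHom.coe_comp, AddMonoidHom.prod_apply, Function.comp_apply,
        AddMonoidHom.coe_snd, AddMonoidHom.coe_fst]
      have h1 : p.2 + q.1 + z = q.1 + p.2 + z := by abel
      have h2 : q.2 + p.1 + z = p.1 + q.2 + z := by abel
      rw [h1, h2, hz])

noncomputable instance : Neg (GGroup F) := ⟨fun g => gneg F g⟩

noncomputable instance : AddCommGroup (GGroup F) :=
  { (inferInstance : AddCommMonoid (GGroup F)),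
    (inferInstance : Neg (GGroup F)) with
    zsmul := zsmulRec
    neg_add_cancel := by
      intro g
      induction g using AddCon.induction_on with
      | H p =>
        show gneg F ((gcon F).mk' p) + (gcon F).mk' p = 0
        have h : gneg F ((gcon F).mk' p) = (gcon F).mk' (p.2, p.1) := rfl
        rw [h, ← map_add]
        have h0 : (0 : GGroup F) = (gcon F).mk' 0 := rfl
        rw [h0]
        apply (AddCon.eq _).mpr
        refine (gcon_iff F _ _).mpr ⟨0, ?_⟩
        simp only [Prod.fst_add, Prod.snd_add, Prod.fst_zero, Prod.snd_zero]
        abel }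

/-- Inclusion of `F` into its Grothendieck group. -/
def gincl : ↥F →+ GGroup F := (gcon F).mk'.comp (AddMonoidHom.inl ↥F ↥F)

lemma gincl_sub_eq_zero_iff (A B : ↥F) :
    gincl F A - gincl F B = 0 ↔ ∃ z : ↥F, A + z = B + z := by
  rw [sub_eq_zero]
  constructor
  · intro h
    have h2 : (gcon F) (A, 0) (B, 0) := (AddCon.eq _).mp h
    obtain ⟨z, hz⟩ := (gcon_iff F _ _).mp h2
    exact ⟨z, by simpa using hz⟩
  · rintro ⟨z, hz⟩
    apply (AddCon.eq _).mpr
    exact (gcon_iff F _ _).mpr ⟨z, by simpa using hz⟩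

end Group

section Separation

variable {X : Type u} [AddCommMonoid X]

lemma add_right_iter {u v s : X} (h : u + s = v + s) (k : ℕ) :
    u + (k + 1) • s = v + (k + 1) • s := by
  induction k with
  | zero => simpa using h
  | succ k ih =>
      rw [succ_nsmul' s (k+1), ← add_assoc, ← add_assoc, h]

lemma absorb {u v s : X} {N M : ℕ} (h : u + s = v + s) (hs : (N + 1) • s = (M + 1) • u) :
    (M + 1 + 1) • u = v + (M + 1) • u := by
  have h3 := add_right_iter h N
  rw [hs] at h3
  rw [succ_nsmul' u (M+1)]
  exact h3

/-- The heart of the injectivity argument: if `a` and `b` lie in each other's faces and become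
equal after adding an element of those faces, then they are equal. -/
lemma eq_of_nsmul_add_eq
    (hinj : ∀ (n : ℕ), 0 < n → ∀ y₁ y₂ : X, n • y₁ = n • y₂ → y₁ = y₂)
    {a b : X} {n : ℕ} (hn : 0 < n) {z : X}
    (hza : z ∈ face a) (hzb : z ∈ face b)
    (h : n • a + z = n • b + z) : a = b := by
  obtain ⟨w, m, hw⟩ := hza
  obtain ⟨w', m', hw'⟩ := hzb
  obtain ⟨n', rfl⟩ : ∃ n', n = n' + 1 := ⟨n - 1, by omega⟩
  have e1 : (n'+1) • a + (m + 1) • a = (n'+1) • b + (m + 1) • a := by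
    have h0 := congrArg (· + w) h
    simpa only [add_assoc, hw] using h0
  have e2 : (n'+1) • b + (m' + 1) • b = (n'+1) • a + (m' + 1) • b := by
    have h0 := congrArg (· + w') h.symm
    simpa only [add_assoc, hw'] using h0
  have hs1 : (n'+1) • ((m+1) • a) = (m+1) • ((n'+1) • a) := by
    rw [← mul_nsmul, ← mul_nsmul]; ring_nf
  have hs2 : (n'+1) • ((m'+1) • b) = (m'+1) • ((n'+1) • b) := by
    rw [← mul_nsmul, ← mul_nsmul]; ring_nf
  have f1 := absorb e1 hs1
  have f2 := absorb e2 hs2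
  have f3 := key (m+1) (m'+1) f1 f2
  have f4 : ((n'+1) * (m + 1 + (m' + 1))) • a = ((n'+1) * (m + 1 + (m' + 1))) • b := by
    rw [mul_nsmul, mul_nsmul]
    exact f3
  exact hinj _ (by positivity) _ _ f4

/-- In the hard case we produce a real-valued additive map on the face separating `a` and `b`. -/
lemma exists_real_hom
    (hinj : ∀ (n : ℕ), 0 < n → ∀ y₁ y₂ : X, n • y₁ = n • y₂ → y₁ = y₂)
    {a b : X} (hne : a ≠ b) (hb : b ∈ face a) (hab : a ∈ face b) :
    ∃ r : ↥(face a) →+ ℝ, r ⟨a, mem_face_self a⟩ ≠ r ⟨b, hb⟩ := by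
  classical
  set F := face a with hF
  set A : ↥F := ⟨a, mem_face_self a⟩
  set B : ↥F := ⟨b, hb⟩
  set g₀ : GGroup F := gincl F A - gincl F B with hg₀
  have htorN : ∀ k : ℕ, 0 < k → k • g₀ ≠ 0 := by
    intro k hk hzero
    rw [hg₀, nsmul_sub, ← map_nsmul, ← map_nsmul, gincl_sub_eq_zero_iff] at hzero
    obtain ⟨z, hz⟩ := hzero
    have hzX : k • a + (z : X) = k • b + (z : X) := by
      have := congrArg Subtype.val hz
      simpa [AddSubmonoidClass.coe_nsmul] using this
    have hza : (z : X) ∈ face a := z.2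
    have hzb : (z : X) ∈ face b := face_le_of_mem hab z.2
    exact hne (eq_of_nsmul_add_eq hinj hk hza hzb hzX)
  have htor : ∀ k : ℤ, k ≠ 0 → k • g₀ ≠ 0 := by
    intro k hk hzero
    rcases lt_trichotomy k 0 with hlt | rfl | hgt
    · apply htorN (-k).toNat (by omega)
      have : ((-k).toNat : ℤ) • g₀ = -(k • g₀) := by
        rw [Int.toNat_of_nonneg (by omega), neg_smul]
      rw [← natCast_zsmul]
      rw [this, hzero, neg_zero]
    · exact hk rfl
    · apply htorN k.toNat (by omega)
      have : (k.toNat : ℤ) • g₀ = k • g₀ := by rw [Int.toNat_of_nonneg (by omega)]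
      rw [← natCast_zsmul, this, hzero]
  -- the subgroup generated by g₀ is free of rank one
  set ψ : ℤ →+ ↥(AddSubgroup.zmultiples g₀) :=
    AddMonoidHom.codRestrict ((zmultiplesHom _) g₀) _
      (fun k => AddSubgroup.mem_zmultiples_iff.mpr ⟨k, by simp [zmultiplesHom_apply]⟩) with hψ
  have hψval : ∀ k : ℤ, (ψ k : GGroup F) = k • g₀ := fun k => rfl
  have hbij : Function.Bijective ψ := by
    constructor
    · intro k l hkl
      by_contra hne'
      have h1 : (k - l) • g₀ ≠ 0 := htor _ (by omega)
      apply h1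
      have := congrArg (Subtype.val) hkl
      rw [hψval, hψval] at this
      rw [sub_smul, this, sub_self]
    · rintro ⟨g, hg⟩
      obtain ⟨k, hk⟩ := AddSubgroup.mem_zmultiples_iff.mp hg
      exact ⟨k, Subtype.ext (by rw [hψval]; exact hk)⟩
  set e := AddEquiv.ofBijective ψ hbij with he
  set f₀ : ↥(AddSubgroup.zmultiples g₀) →+ ℝ :=
    (Int.castAddHom ℝ).comp e.symm.toAddMonoidHom with hf₀
  obtain ⟨fG, hfG⟩ := (Module.Baer.of_divisible ℝ).extension_property_addMonoidHom
    (AddSubgroup.zmultiples g₀).subtype (Subtype.val_injective) f₀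
  refine ⟨fG.comp (gincl F), ?_⟩
  have hmem : g₀ ∈ AddSubgroup.zmultiples g₀ := AddSubgroup.mem_zmultiples g₀
  have hval : fG g₀ = 1 := by
    have h1 : fG ((AddSubgroup.zmultiples g₀).subtype ⟨g₀, hmem⟩) = f₀ ⟨g₀, hmem⟩ := by
      rw [← AddMonoidHom.comp_apply, hfG]
    have h2 : e 1 = ⟨g₀, hmem⟩ := Subtype.ext (by rw [he]; show (ψ 1 : GGroup F) = g₀; rw [hψval, one_smul])
    have h3 : e.symm ⟨g₀, hmem⟩ = 1 := by rw [← h2, AddEquiv.symm_apply_apply]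
    have h4 : f₀ ⟨g₀, hmem⟩ = ((1 : ℤ) : ℝ) := by rw [hf₀]; simp [h3]
    simpa [h4] using h1
  intro heq
  simp only [AddMonoidHom.comp_apply] at heq
  have : fG (gincl F A - gincl F B) = 0 := by rw [map_sub, heq, sub_self]
  rw [← hg₀, hval] at this
  exact one_ne_zero this

open Classical in
/-- A character of `X` built from a face `F` and an additive real-valued map on `F`:
`exp (r x)` on `F` and `0` outside. -/
noncomputable def faceChar (F : AddSubmonoid X)
    (hface : ∀ x y : X, x + y ∈ F → x ∈ F) (r : ↥F →+ ℝ) : AddChar X ℝ≥0 where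
  toFun x := if h : x ∈ F then expNN (r ⟨x, h⟩) else 0
  map_zero_eq_one' := by
    rw [dif_pos F.zero_mem]
    have h0 : (⟨0, F.zero_mem⟩ : ↥F) = 0 := rfl
    rw [h0, map_zero, expNN_zero]
  map_add_eq_mul' := by
    intro x y
    by_cases hx : x ∈ F <;> by_cases hy : y ∈ F
    · have hxy : x + y ∈ F := F.add_mem hx hy
      rw [dif_pos hxy, dif_pos hx, dif_pos hy, ← expNN_add, ← map_add]
      congr 1
    · have hxy : ¬ (x + y ∈ F) := fun h => hy (hface y x (by rwa [add_comm] at h))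
      rw [dif_neg hxy, dif_neg hy, mul_zero]
    · have hxy : ¬ (x + y ∈ F) := fun h => hx (hface x y h)
      rw [dif_neg hxy, dif_neg hx, zero_mul]
    · have hxy : ¬ (x + y ∈ F) := fun h => hx (hface x y h)
      rw [dif_neg hxy, dif_neg hx, zero_mul]

lemma faceChar_apply_mem (F : AddSubmonoid X) (hface) (r : ↥F →+ ℝ) {x : X} (hx : x ∈ F) :
    faceChar F hface r x = expNN (r ⟨x, hx⟩) := dif_pos hx

lemma faceChar_apply_not_mem (F : AddSubmonoid X) (hface) (r : ↥F →+ ℝ) {x : X}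
    (hx : ¬ x ∈ F) : faceChar F hface r x = 0 := dif_neg hx

/-- Separation of points by `ℝ≥0`-valued characters. -/
theorem exists_addChar_ne
    (hinj : ∀ (n : ℕ), 0 < n → ∀ y₁ y₂ : X, n • y₁ = n • y₂ → y₁ = y₂)
    {a b : X} (hne : a ≠ b) : ∃ χ : AddChar X ℝ≥0, χ a ≠ χ b := by
  classical
  have hface : ∀ (c : X) (x y : X), x + y ∈ face c → x ∈ face c :=
    fun c x y h => mem_face_left h
  by_cases hb : b ∈ face a
  · by_cases hab : a ∈ face b
    · obtain ⟨r, hr⟩ := exists_real_hom hinj hne hb hab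
      refine ⟨faceChar (face a) (hface a) r, ?_⟩
      rw [faceChar_apply_mem (face a) (hface a) r (mem_face_self a),
        faceChar_apply_mem (face a) (hface a) r hb]
      exact fun h => hr (expNN_injective h)
    · refine ⟨faceChar (face b) (hface b) 0, ?_⟩
      rw [faceChar_apply_mem (face b) (hface b) 0 (mem_face_self b),
        faceChar_apply_not_mem (face b) (hface b) 0 hab]
      simp [expNN_zero]
  · refine ⟨faceChar (face a) (hface a) 0, ?_⟩
    rw [faceChar_apply_mem (face a) (hface a) 0 (mem_face_self a),
      faceChar_apply_not_mem (face a) (hface a) 0 hb]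
    simp [expNN_zero]

end Separation

section Main

variable (X : Type u) [AddCommMonoid X]

/-- The evaluation map of `X` into the `ℝ≥0`-module of `Additive ℝ≥0`-valued functions
on the characters of `X`. -/
noncomputable def MHom : X →+ (AddChar X ℝ≥0 → Additive ℝ≥0) where
  toFun x := fun χ => Additive.ofMul (χ x)
  map_zero' := funext fun χ => congrArg Additive.ofMul χ.map_zero_eq_one
  map_add' x y := funext fun χ => congrArg Additive.ofMul (χ.map_add_eq_mul x y)

end Main

end Stmt17

open Stmt17 in
set_option maxHeartbeats 1000000 in
set_option synthInstance.maxHeartbeats 1000000 in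
/-- A uniquely divisible additive commutative monoid `X` admits an injective additive
monoid homomorphism `M` into a convex cone `C` (an additive commutative monoid with an
`ℝ≥0`-module structure) such that every element of `C` is a finite sum of elements of the
form `c • M x` with `c : ℝ≥0` and `x : X`. -/
theorem stmt_17 (X : Type u) [AddCommMonoid X]
    (hdiv : ∀ (x : X) (n : ℕ), 0 < n → ∃ y : X, n • y = x)
    (hinj : ∀ (n : ℕ), 0 < n → ∀ y₁ y₂ : X, n • y₁ = n • y₂ → y₁ = y₂) :
    ∃ (C : Type u) (_ : AddCommMonoid C) (_ : Module ℝ≥0 C) (M : X →+ C),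
      Function.Injective M ∧
      ∀ y : C, y ∈ AddSubmonoid.closure {z : C | ∃ (c : ℝ≥0) (x : X), z = c • M x} := by
  classical
  set D := AddChar X ℝ≥0 → Additive ℝ≥0
  set Csub : Submodule ℝ≥0 D := Submodule.span ℝ≥0 (Set.range (MHom X)) with hCsub
  set C := ↥Csub
  set M : X →+ C := (MHom X).codRestrict Csub.toAddSubmonoid
    (fun x => Submodule.subset_span ⟨x, rfl⟩) with hM
  refine ⟨C, inferInstance, inferInstance, M, ?_, ?_⟩
  · -- injectivity
    intro x y hxy
    by_contra hne
    obtain ⟨χ, hχ⟩ := exists_addChar_ne hinj hne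
    apply hχ
    have h1 : (M x : D) = (M y : D) := congrArg Subtype.val hxy
    have h2 : MHom X x = MHom X y := h1
    exact congrFun h2 χ
  · -- generation
    intro y
    set T := AddSubmonoid.closure {z : C | ∃ (c : ℝ≥0) (x : X), z = c • M x} with hT
    have hsmul : ∀ (c : ℝ≥0), ∀ z ∈ T, c • z ∈ T := by
      intro c z hz
      induction hz using AddSubmonoid.closure_induction with
      | mem w hw =>
          obtain ⟨c', x, rfl⟩ := hw
          exact AddSubmonoid.subset_closure ⟨c * c', x, by rw [smul_smul]⟩
      | zero => rw [smul_zero]; exact T.zero_mem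
      | add w v _ _ hw hv => rw [smul_add]; exact T.add_mem hw hv
    have main : ∀ (v : D), v ∈ Submodule.span ℝ≥0 (Set.range (MHom X)) →
        ∀ (h : v ∈ Csub), (⟨v, h⟩ : C) ∈ T := by
      intro v hv
      induction hv using Submodule.span_induction with
      | mem w hw =>
          obtain ⟨x, rfl⟩ := hw
          intro h
          refine AddSubmonoid.subset_closure ⟨1, x, ?_⟩
          apply Subtype.ext
          show MHom X x = ((1 : ℝ≥0) • M x : C).val
          rw [one_smul]
          rfl
      | zero => intro h; exact T.zero_mem
      | add w v hw hv ihw ihv =>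
          intro h
          have he : (⟨w + v, h⟩ : C) = ⟨w, hw⟩ + ⟨v, hv⟩ := rfl
          rw [he]; exact T.add_mem (ihw hw) (ihv hv)
      | smul c w hw ihw =>
          intro h
          have he : (⟨c • w, h⟩ : C) = c • (⟨w, hw⟩ : C) := rfl
          rw [he]; exact hsmul c _ (ihw hw)
    exact main y.1 y.2 y.2
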